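/- arXiv:2506.24112 — 4 statements merged into one kernel-verified Lean document; each statement's English description precedes it below -/
import Mathlib

section
/- The reshuffling map can increase trace distance by at most a factor d: for bipartite density matrices ρ₁, ρ₂ on ℂ^d ⊗ ℂ^d, ‖R(ρ₁) − R(ρ₂)‖₁ ≤ d·‖ρ₁ − ρ₂‖₁. -/
open scoped Matrix ComplexOrder Kronecker

/-- Singular values of a square complex matrix: square roots of the eigenvalues of `Aᴴ * A`. -/
noncomputable def singularValues {n : Type*} [Fintype n] [DecidableEq n]
    (A : Matrix n n ℂ) : n → ℝ :=
  fun i => Real.sqrt ((Matrix.posSemidef_conjTranspose_mul_self A).1.eigenvalues i)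

/-- Schatten 1-norm (trace norm): the sum of the singular values. -/
noncomputable def traceNorm {n : Type*} [Fintype n] [DecidableEq n]
    (A : Matrix n n ℂ) : ℝ :=
  ∑ i, singularValues A i

/-- Operator (spectral) norm: the largest singular value. -/
noncomputable def opNorm {n : Type*} [Fintype n] [DecidableEq n]
    (A : Matrix n n ℂ) : ℝ :=
  ⨆ i, singularValues A i

/-- Frobenius (Schatten 2-) norm. -/
noncomputable def frobNorm {n : Type*} [Fintype n] [DecidableEq n]
    (A : Matrix n n ℂ) : ℝ :=
  Real.sqrt (∑ i, ∑ j, ‖A i j‖ ^ 2)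

/-- The Liouville representation (A-form) `Σ_m K_m ⊗ K_m*` of the channel with
Kraus operators `K_m`. -/
noncomputable def liouville {d m : ℕ} (K : Fin m → Matrix (Fin d) (Fin d) ℂ) :
    Matrix (Fin d × Fin d) (Fin d × Fin d) ℂ :=
  ∑ l, (K l) ⊗ₖ ((K l).map (starRingEnd ℂ))

/-- The reshuffling operation, sending `|i⟩⟨j| ⊗ |k⟩⟨l|` to `|i⟩⟨k| ⊗ |j⟩⟨l|`. -/
def reshuffle {n : Type*} (M : Matrix (n × n) (n × n) ℂ) : Matrix (n × n) (n × n) ℂ :=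
  fun p q => M (p.1, q.1) (p.2, q.2)


section Aux
variable {n : Type*} [Fintype n] [DecidableEq n] (A : Matrix n n ℂ)

lemma trace_eq_sum_eigenvalues {B : Matrix n n ℂ} (hB : B.IsHermitian) :
    B.trace = ∑ i, (hB.eigenvalues i : ℂ) := by
  conv_lhs => rw [hB.spectral_theorem]
  rw [Unitary.conjStarAlgAut_apply]
  rw [Matrix.trace_mul_cycle,
    show (star (Matrix.IsHermitian.eigenvectorUnitary hB : Matrix n n ℂ)) *
      (Matrix.IsHermitian.eigenvectorUnitary hB : Matrix n n ℂ) = 1 from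
      (Matrix.mem_unitaryGroup_iff').mp (Matrix.IsHermitian.eigenvectorUnitary hB).2,
    Matrix.one_mul, Matrix.trace_diagonal]
  rfl

lemma sum_sq_singularValues :
    ∑ i, singularValues A i ^ 2 = ∑ i, ∑ j, ‖A i j‖ ^ 2 := by
  have h := Matrix.posSemidef_conjTranspose_mul_self A
  have h1 : ∀ i, singularValues A i ^ 2 = h.1.eigenvalues i := fun i =>
    Real.sq_sqrt (h.eigenvalues_nonneg i)
  have h2 : (Aᴴ * A).trace = ∑ i, (h.1.eigenvalues i : ℂ) := trace_eq_sum_eigenvalues h.1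
  have h3 : (Aᴴ * A).trace = ∑ j, ∑ i, (‖A i j‖ ^ 2 : ℂ) := by
    simp only [Matrix.trace, Matrix.diag, Matrix.mul_apply, Matrix.conjTranspose_apply]
    congr 1; ext j; congr 1; ext i
    rw [mul_comm, Complex.star_def, Complex.mul_conj, Complex.normSq_eq_norm_sq]
    push_cast; ring
  rw [h2] at h3
  have h4 : (∑ i, (h.1.eigenvalues i : ℂ)) = ((∑ i, h.1.eigenvalues i : ℝ) : ℂ) := by push_cast; rfl
  have h5 : (∑ j, ∑ i, (‖A i j‖ ^ 2 : ℂ))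
      = ((∑ j, ∑ i, ‖A i j‖ ^ 2 : ℝ) : ℂ) := by push_cast; rfl
  rw [h4, h5] at h3
  have := Complex.ofReal_inj.mp h3
  simp only [h1]
  rw [this, Finset.sum_comm]

lemma frobNorm_le_traceNorm : frobNorm A ≤ traceNorm A := by
  rw [frobNorm, ← sum_sq_singularValues]
  have h := Finset.sum_sq_le_sq_sum_of_nonneg
    (s := Finset.univ) (f := singularValues A) (fun i _ => Real.sqrt_nonneg _)
  calc Real.sqrt (∑ i, singularValues A i ^ 2) ≤ Real.sqrt ((∑ i, singularValues A i) ^ 2) :=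
        Real.sqrt_le_sqrt h
    _ = traceNorm A := Real.sqrt_sq (Finset.sum_nonneg fun i _ => Real.sqrt_nonneg _)

lemma traceNorm_le_sqrt_card_mul_frobNorm :
    traceNorm A ≤ Real.sqrt (Fintype.card n) * frobNorm A := by
  rw [traceNorm, frobNorm, ← sum_sq_singularValues, ← Real.sqrt_mul (by positivity)]
  have hs : (0:ℝ) ≤ ∑ i, singularValues A i :=
    Finset.sum_nonneg fun i _ => show (0:ℝ) ≤ singularValues A i from Real.sqrt_nonneg _
  rw [Real.le_sqrt hs]
  simpa [Finset.card_univ] using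
    sq_sum_le_card_mul_sum_sq (s := Finset.univ) (f := singularValues A)
  positivity

lemma frobNorm_reshuffle (M : Matrix (n × n) (n × n) ℂ) :
    frobNorm (reshuffle M) = frobNorm M := by
  unfold frobNorm reshuffle
  congr 1
  simp only [Fintype.sum_prod_type]
  exact Finset.sum_congr rfl fun a _ => Finset.sum_comm

end Aux

/-- Reshuffling can increase the trace distance of bipartite density matrices by at most
a factor of `d`. -/
theorem traceNorm_reshuffle_sub_le {d : ℕ} (hd : 1 ≤ d)
    (ρ₁ ρ₂ : Matrix (Fin d × Fin d) (Fin d × Fin d) ℂ)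
    (hρ₁ : ρ₁.PosSemidef) (htr₁ : ρ₁.trace = 1)
    (hρ₂ : ρ₂.PosSemidef) (htr₂ : ρ₂.trace = 1) :
    traceNorm (reshuffle ρ₁ - reshuffle ρ₂) ≤ d * traceNorm (ρ₁ - ρ₂) := by
  have hre : reshuffle ρ₁ - reshuffle ρ₂ = reshuffle (ρ₁ - ρ₂) := by
    ext p q; simp [reshuffle, Matrix.sub_apply]
  rw [hre]
  have hcard : Real.sqrt (Fintype.card (Fin d × Fin d)) = d := by
    simp only [Fintype.card_prod, Fintype.card_fin]
    push_cast
    exact Real.sqrt_mul_self (Nat.cast_nonneg d)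
  calc traceNorm (reshuffle (ρ₁ - ρ₂))
      ≤ Real.sqrt (Fintype.card (Fin d × Fin d)) * frobNorm (reshuffle (ρ₁ - ρ₂)) :=
        traceNorm_le_sqrt_card_mul_frobNorm _
    _ = d * frobNorm (ρ₁ - ρ₂) := by rw [frobNorm_reshuffle, hcard]
    _ ≤ d * traceNorm (ρ₁ - ρ₂) :=
        mul_le_mul_of_nonneg_left (frobNorm_le_traceNorm _) (by positivity)
end

section
/- For any even function f on ℝ applied via functional calculus, f([[0, A],[A†, 0]]) = [[U f(Σ) U†, 0],[0, V f(Σ) V†]], where A = UΣV† is a singular value decomposition. -/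
open scoped Matrix ComplexOrder Kronecker

/-- Functional calculus on a Hermitian matrix via the spectral theorem. -/
noncomputable def matFun {n : Type*} [Fintype n] [DecidableEq n]
    {A : Matrix n n ℂ} (hA : A.IsHermitian) (f : ℝ → ℝ) : Matrix n n ℂ :=
  (hA.eigenvectorUnitary : Matrix n n ℂ) *
    Matrix.diagonal (fun i => (f (hA.eigenvalues i) : ℂ)) *
    star (hA.eigenvectorUnitary : Matrix n n ℂ)

open Polynomial

/-- Conjugation by a unitary matrix as an `ℝ`-algebra hom. -/
noncomputable def conjAlgHomAux {ι : Type*} [Fintype ι] [DecidableEq ι]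
    (W : Matrix ι ι ℂ) (h1 : star W * W = 1) (h2 : W * star W = 1) :
    Matrix ι ι ℂ →ₐ[ℝ] Matrix ι ι ℂ where
  toFun M := W * M * star W
  map_one' := by simpa using h2
  map_mul' M N := by
    simp only [mul_assoc]
    rw [← mul_assoc (star W) W, h1, one_mul]
  map_zero' := by simp
  map_add' M N := by simp [mul_add, add_mul]
  commutes' r := by
    simp [Algebra.algebraMap_eq_smul_one, mul_smul_comm, smul_mul_assoc, h2]

lemma aeval_conjAux {ι : Type*} [Fintype ι] [DecidableEq ι]
    (W M : Matrix ι ι ℂ) (h1 : star W * W = 1) (h2 : W * star W = 1) (p : ℝ[X]) :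
    aeval (W * M * star W) p = W * aeval M p * star W :=
  aeval_algHom_apply (conjAlgHomAux W h1 h2) M p

lemma aeval_diagonalAux {ι : Type*} [Fintype ι] [DecidableEq ι]
    (c : ι → ℂ) (p : ℝ[X]) :
    aeval (Matrix.diagonal c) p = Matrix.diagonal (fun i => aeval (c i) p) := by
  have h := aeval_algHom_apply (Matrix.diagonalAlgHom ℝ : (ι → ℂ) →ₐ[ℝ] Matrix ι ι ℂ) c p
  simp only [Matrix.diagonalAlgHom_apply] at h
  rw [h]
  have h2 : (aeval c p : ι → ℂ) = fun i => aeval (c i) p := by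
    funext i
    exact (aeval_algHom_apply (Pi.evalAlgHom ℝ (fun _ : ι => ℂ) i) c p).symm
  rw [h2]

lemma aeval_ofRealAux (x : ℝ) (p : ℝ[X]) :
    aeval (x : ℂ) p = ((p.eval x : ℝ) : ℂ) := by
  rw [← Complex.coe_algebraMap, aeval_algebraMap_apply_eq_algebraMap_eval]

lemma half_smul_addAux {M : Type*} [AddCommMonoid M] [Module ℂ M] (x : M) :
    (1/2 : ℂ) • (x + x) = x := by
  rw [← two_smul ℂ, smul_smul]; norm_num

/-- For an even function `f`, applying `f` to the Hermitization `[[0, A], [Aᴴ, 0]]` of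
`A = UΣVᴴ` gives the block-diagonal matrix `[[U f(Σ) Uᴴ, 0], [0, V f(Σ) Vᴴ]]`. -/
theorem matFun_even_hermitization {n : ℕ}
    (A U V : Matrix (Fin n) (Fin n) ℂ)
    (hU : U ∈ Matrix.unitaryGroup (Fin n) ℂ) (hV : V ∈ Matrix.unitaryGroup (Fin n) ℂ)
    (s : Fin n → ℝ) (hs : ∀ i, 0 ≤ s i)
    (hA : A = U * Matrix.diagonal (fun i => (s i : ℂ)) * Vᴴ)
    (hH : (Matrix.fromBlocks 0 A Aᴴ 0).IsHermitian)
    (f : ℝ → ℝ) (hf : ∀ x, f (-x) = f x) :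
    matFun hH f =
      Matrix.fromBlocks
        (U * Matrix.diagonal (fun i => (f (s i) : ℂ)) * Uᴴ) 0 0
        (V * Matrix.diagonal (fun i => (f (s i) : ℂ)) * Vᴴ) := by
  classical
  subst hA
  set Sg : Matrix (Fin n) (Fin n) ℂ := Matrix.diagonal (fun i => (s i : ℂ)) with hSg
  set Fm : Matrix (Fin n) (Fin n) ℂ := Matrix.diagonal (fun i => (f (s i) : ℂ)) with hFm
  -- interpolation polynomial
  set T : Finset ℝ :=
    (Finset.univ.image s ∪ Finset.univ.image (fun i => -s i)) ∪
      Finset.univ.image hH.eigenvalues with hT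
  set p : ℝ[X] := Lagrange.interpolate T id f with hp
  have hpev : ∀ x ∈ T, p.eval x = f x := fun x hx =>
    Lagrange.eval_interpolate_at_node f (Set.injOn_id _) hx
  have hmem_s : ∀ i, s i ∈ T := fun i => by
    simp [hT]
  have hmem_ns : ∀ i, -s i ∈ T := fun i => by
    simp only [hT, Finset.mem_union, Finset.mem_image]
    exact Or.inl (Or.inr ⟨i, Finset.mem_univ i, rfl⟩)
  have hmem_e : ∀ j, hH.eigenvalues j ∈ T := fun j => by
    simp only [hT, Finset.mem_union, Finset.mem_image]
    exact Or.inr ⟨j, Finset.mem_univ j, rfl⟩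
  -- unitarity facts
  have hU1 : U * Uᴴ = 1 := by
    simpa [Matrix.star_eq_conjTranspose] using Matrix.mem_unitaryGroup_iff.mp hU
  have hU2 : Uᴴ * U = 1 := by
    simpa [Matrix.star_eq_conjTranspose] using Matrix.mem_unitaryGroup_iff'.mp hU
  have hV1 : V * Vᴴ = 1 := by
    simpa [Matrix.star_eq_conjTranspose] using Matrix.mem_unitaryGroup_iff.mp hV
  have hV2 : Vᴴ * V = 1 := by
    simpa [Matrix.star_eq_conjTranspose] using Matrix.mem_unitaryGroup_iff'.mp hV
  -- the explicit diagonalizing unitary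
  set B : Matrix (Fin n ⊕ Fin n) (Fin n ⊕ Fin n) ℂ := Matrix.fromBlocks U U V (-V) with hB
  set c : ℝ := (Real.sqrt 2)⁻¹ with hc
  set W : Matrix (Fin n ⊕ Fin n) (Fin n ⊕ Fin n) ℂ := (c : ℂ) • B with hW
  have hc2 : (c : ℂ) * (c : ℂ) = 1/2 := by
    rw [← Complex.ofReal_mul, hc, ← mul_inv, Real.mul_self_sqrt (by norm_num)]
    norm_num
  have hstarB : star B = Matrix.fromBlocks Uᴴ Vᴴ Uᴴ (-Vᴴ) := by
    simp [hB, Matrix.star_eq_conjTranspose, Matrix.fromBlocks_conjTranspose]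
  have hstarW : star W = (c : ℂ) • star B := by
    simp [hW, star_smul, Complex.star_def, Complex.conj_ofReal]
  have h1 : star W * W = 1 := by
    rw [hstarW, hW, smul_mul_assoc, mul_smul_comm, smul_smul, hc2, hstarB, hB,
      Matrix.fromBlocks_multiply]
    simp only [Matrix.mul_neg, Matrix.neg_mul, neg_neg, hU2, hV2, add_neg_cancel,
      Matrix.fromBlocks_smul, smul_zero, half_smul_addAux, Matrix.fromBlocks_one]
  have h2 : W * star W = 1 := by
    rw [hstarW, hW, smul_mul_assoc, mul_smul_comm, smul_smul, hc2, hstarB, hB,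
      Matrix.fromBlocks_multiply]
    simp only [Matrix.mul_neg, Matrix.neg_mul, neg_neg, hU1, hV1, add_neg_cancel,
      Matrix.fromBlocks_smul, smul_zero, half_smul_addAux, Matrix.fromBlocks_one]
  -- Σ is selfadjoint
  have hSgH : Sgᴴ = Sg := by
    simp [hSg, Matrix.diagonal_conjTranspose, Function.comp, Complex.star_def,
      Complex.conj_ofReal]
  have hAH : (U * Sg * Vᴴ)ᴴ = V * Sg * Uᴴ := by
    rw [Matrix.conjTranspose_mul, Matrix.conjTranspose_mul, Matrix.conjTranspose_conjTranspose,
      hSgH, mul_assoc]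
  set D : Matrix (Fin n ⊕ Fin n) (Fin n ⊕ Fin n) ℂ := Matrix.fromBlocks Sg 0 0 (-Sg) with hD
  have hWD : Matrix.fromBlocks 0 (U * Sg * Vᴴ) (U * Sg * Vᴴ)ᴴ 0 = W * D * star W := by
    rw [hAH, hW, hstarW, smul_mul_assoc, smul_mul_assoc, mul_smul_comm, smul_smul, hc2,
      hB, hstarB, hD, Matrix.fromBlocks_multiply, Matrix.fromBlocks_multiply]
    simp only [Matrix.mul_zero, Matrix.zero_mul, Matrix.mul_neg, Matrix.neg_mul, neg_neg,
      add_zero, zero_add, add_neg_cancel, neg_add_cancel,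
      Matrix.fromBlocks_smul, smul_zero, half_smul_addAux]
  -- eigenvector unitary facts
  set E : Matrix (Fin n ⊕ Fin n) (Fin n ⊕ Fin n) ℂ := (hH.eigenvectorUnitary : Matrix (Fin n ⊕ Fin n) (Fin n ⊕ Fin n) ℂ)
    with hE
  have hE1 : star E * E = 1 := Matrix.mem_unitaryGroup_iff'.mp hH.eigenvectorUnitary.2
  have hE2 : E * star E = 1 := Matrix.mem_unitaryGroup_iff.mp hH.eigenvectorUnitary.2
  -- left computation : aeval p H = matFun hH f
  have main1 : aeval (Matrix.fromBlocks 0 (U * Sg * Vᴴ) (U * Sg * Vᴴ)ᴴ 0) p = matFun hH f := by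
    have hdfun : (fun i => aeval ((RCLike.ofReal ∘ hH.eigenvalues) i) p) =
        (fun i : Fin n ⊕ Fin n => (f (hH.eigenvalues i) : ℂ)) := by
      funext i
      rw [Function.comp_apply,
        show (RCLike.ofReal (hH.eigenvalues i) : ℂ) = ((hH.eigenvalues i : ℝ) : ℂ) from rfl,
        aeval_ofRealAux, hpev _ (hmem_e i)]
    conv_lhs => rw [hH.spectral_theorem]
    rw [Unitary.conjStarAlgAut_apply]
    rw [← hE, aeval_conjAux _ _ hE1 hE2, aeval_diagonalAux, hdfun]
    unfold matFun
    rw [← hE]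
  -- right computation
  have main2 : aeval (Matrix.fromBlocks 0 (U * Sg * Vᴴ) (U * Sg * Vᴴ)ᴴ 0) p =
      Matrix.fromBlocks (U * Fm * Uᴴ) 0 0 (V * Fm * Vᴴ) := by
    rw [hWD, aeval_conjAux _ _ h1 h2]
    have hDdiag : D = Matrix.diagonal
        (Sum.elim (fun i => ((s i : ℝ) : ℂ)) (fun i => ((-s i : ℝ) : ℂ))) := by
      rw [hD, hSg, ← Matrix.fromBlocks_diagonal]
      congr 1
      have : (fun i => ((-s i : ℝ) : ℂ)) = fun i => -((s i : ℝ) : ℂ) := by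
        funext i; push_cast; ring
      rw [this, Matrix.diagonal_neg]
    rw [hDdiag, aeval_diagonalAux]
    have heval : (fun j => aeval ((Sum.elim (fun i => ((s i : ℝ) : ℂ))
        (fun i => ((-s i : ℝ) : ℂ))) j) p) =
        Sum.elim (fun i => ((f (s i) : ℝ) : ℂ)) (fun i => ((f (s i) : ℝ) : ℂ)) := by
      funext j
      cases j with
      | inl i => rw [Sum.elim_inl, Sum.elim_inl, aeval_ofRealAux, hpev _ (hmem_s i)]
      | inr i => rw [Sum.elim_inr, Sum.elim_inr, aeval_ofRealAux, hpev _ (hmem_ns i), hf]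
    rw [heval, ← Matrix.fromBlocks_diagonal, ← hFm]
    rw [hW, hstarW, smul_mul_assoc, smul_mul_assoc, mul_smul_comm, smul_smul, hc2,
      hB, hstarB, Matrix.fromBlocks_multiply, Matrix.fromBlocks_multiply]
    simp only [Matrix.mul_zero, Matrix.zero_mul, Matrix.mul_neg, Matrix.neg_mul, neg_neg,
      add_zero, zero_add, add_neg_cancel, neg_add_cancel,
      Matrix.fromBlocks_smul, smul_zero, half_smul_addAux]
  rw [← main1, main2, hFm]
end

section
/- For any two quantum states (positive semidefinite trace-one matrices) ρ, σ, the Fuchs–van de Graaf inequalities hold: 1 − √F(ρ,σ) ≤ (1/2)‖ρ − σ‖₁ ≤ √(1 − F(ρ,σ)), where F(ρ,σ) = ‖√ρ √σ‖₁². -/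
open scoped Matrix ComplexOrder Kronecker

/-- The positive semidefinite square root (as in the older Mathlib's `Matrix.PosSemidef.sqrt`). -/
noncomputable def Matrix.PosSemidef.sqrt {n : Type*} [Fintype n] {𝕜 : Type*} [RCLike 𝕜]
    [DecidableEq n] {A : Matrix n n 𝕜} (hA : A.PosSemidef) : Matrix n n 𝕜 :=
  hA.1.eigenvectorUnitary.1 * Matrix.diagonal ((↑) ∘ (√·) ∘ hA.1.eigenvalues) *
    (star hA.1.eigenvectorUnitary : Matrix n n 𝕜)

theorem Matrix.IsHermitian.star_mul_self_mul_eq_diagonal {n : Type*} [Fintype n] {𝕜 : Type*}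
    [RCLike 𝕜] [DecidableEq n] {A : Matrix n n 𝕜} (hA : A.IsHermitian) :
    (star (hA.eigenvectorUnitary : Matrix n n 𝕜)) * A * (hA.eigenvectorUnitary : Matrix n n 𝕜) =
      Matrix.diagonal (RCLike.ofReal ∘ hA.eigenvalues) := by
  have := hA.conjStarAlgAut_star_eigenvectorUnitary
  rw [Unitary.conjStarAlgAut_star_apply] at this
  exact this

theorem Matrix.IsHermitian.spectral_theorem' {n : Type*} [Fintype n] {𝕜 : Type*}
    [RCLike 𝕜] [DecidableEq n] {A : Matrix n n 𝕜} (hA : A.IsHermitian) :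
    A = (hA.eigenvectorUnitary : Matrix n n 𝕜) * Matrix.diagonal (RCLike.ofReal ∘ hA.eigenvalues) *
      (star (hA.eigenvectorUnitary : Matrix n n 𝕜)) := by
  have := hA.spectral_theorem
  rw [Unitary.conjStarAlgAut_apply] at this
  exact this

theorem Matrix.PosSemidef.posSemidef_sqrt {n : Type*} [Fintype n] {𝕜 : Type*} [RCLike 𝕜]
    [DecidableEq n] {A : Matrix n n 𝕜} (hA : A.PosSemidef) : hA.sqrt.PosSemidef := by
  unfold Matrix.PosSemidef.sqrt
  rw [Matrix.star_eq_conjTranspose]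
  exact (Matrix.PosSemidef.diagonal
    (fun i => RCLike.ofReal_nonneg.mpr (Real.sqrt_nonneg _))).mul_mul_conjTranspose_same _

theorem Matrix.PosSemidef.sqrt_mul_self {n : Type*} [Fintype n] {𝕜 : Type*} [RCLike 𝕜]
    [DecidableEq n] {A : Matrix n n 𝕜} (hA : A.PosSemidef) : hA.sqrt * hA.sqrt = A := by
  unfold Matrix.PosSemidef.sqrt
  conv_rhs => rw [hA.1.spectral_theorem']
  have hUU : (star (hA.1.eigenvectorUnitary : Matrix n n 𝕜)) * hA.1.eigenvectorUnitary = 1 :=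
    Unitary.coe_star_mul_self _
  simp only [Matrix.mul_assoc]
  rw [← Matrix.mul_assoc (star _) _, hUU, Matrix.one_mul, ← Matrix.mul_assoc (Matrix.diagonal _),
    Matrix.diagonal_mul_diagonal]
  congr 3
  funext i
  simp only [Function.comp_apply]
  rw [← RCLike.ofReal_mul, Real.mul_self_sqrt (hA.eigenvalues_nonneg i)]

open Matrix

/-- Cauchy-Schwarz for finite sums of complex numbers. -/
lemma cs_sum {n : Type*} [Fintype n] (f g : n → ℂ) :
    ‖∑ j, (starRingEnd ℂ) (f j) * g j‖ ≤
      Real.sqrt (∑ j, ‖f j‖ ^ 2) * Real.sqrt (∑ j, ‖g j‖ ^ 2) := by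
  have h := norm_inner_le_norm (𝕜 := ℂ) (E := EuclideanSpace ℂ n)
    ((WithLp.equiv 2 (n → ℂ)).symm f) ((WithLp.equiv 2 (n → ℂ)).symm g)
  simpa [PiLp.inner_apply, RCLike.inner_apply', EuclideanSpace.norm_eq, mul_comm] using h

lemma conjTranspose_mul_apply' {n : Type*} [Fintype n] (X Y : Matrix n n ℂ) (i k : n) :
    (Xᴴ * Y) i k = ∑ j, (starRingEnd ℂ) (X j i) * Y j k := by
  simp [Matrix.mul_apply, Matrix.conjTranspose_apply]

lemma col_norm_sq {n : Type*} [Fintype n] (C : Matrix n n ℂ) (i : n) :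
    ∑ j, ‖C j i‖ ^ 2 = ((Cᴴ * C) i i).re := by
  rw [conjTranspose_mul_apply', Complex.re_sum]
  congr 1; ext j
  rw [Complex.conj_mul']
  simp [← Complex.ofReal_pow, Complex.sq_norm]

section
variable {n : Type*} [Fintype n] [DecidableEq n] (M : Matrix n n ℂ)

lemma gram_eq :
    (M * ((Matrix.posSemidef_conjTranspose_mul_self M).1.eigenvectorUnitary : Matrix n n ℂ))ᴴ *
      (M * ((Matrix.posSemidef_conjTranspose_mul_self M).1.eigenvectorUnitary : Matrix n n ℂ)) =
    diagonal (RCLike.ofReal ∘ (Matrix.posSemidef_conjTranspose_mul_self M).1.eigenvalues) := by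
  set h := (Matrix.posSemidef_conjTranspose_mul_self M).1
  have := h.star_mul_self_mul_eq_diagonal
  rw [star_eq_conjTranspose] at this
  rw [conjTranspose_mul, ← this]
  noncomm_ring

lemma re_trace_mul_le_traceNorm (U : Matrix n n ℂ) (hU : U ∈ unitaryGroup n ℂ) :
    ((M * U).trace).re ≤ traceNorm M := by
  set h := (Matrix.posSemidef_conjTranspose_mul_self M).1 with hh
  set W : Matrix n n ℂ := (h.eigenvectorUnitary : Matrix n n ℂ) with hW
  have hWmem : W ∈ unitaryGroup n ℂ := SetLike.coe_mem _
  set C : Matrix n n ℂ := star U * W with hCdef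
  have hCu : C ∈ unitaryGroup n ℂ := mul_mem (Unitary.star_mem hU) hWmem
  have htr : (M * U).trace = (Cᴴ * (M * W)).trace := by
    have hWW : W * Wᴴ = 1 := by
      rw [← star_eq_conjTranspose]; exact (mem_unitaryGroup_iff).mp hWmem
    have hC2 : Cᴴ * (M * W) = Wᴴ * ((U * M) * W) := by
      simp [hCdef, star_eq_conjTranspose, conjTranspose_mul, Matrix.mul_assoc]
    rw [hC2]
    conv_rhs => rw [trace_mul_comm]
    rw [Matrix.mul_assoc (U * M) W Wᴴ, hWW, Matrix.mul_one, trace_mul_comm]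
  rw [htr]
  have h1 : ((Cᴴ * (M * W)).trace).re ≤ ‖(Cᴴ * (M * W)).trace‖ := Complex.re_le_norm _
  refine h1.trans ?_
  rw [Matrix.trace]
  refine (norm_sum_le _ _).trans ?_
  have hbound : ∀ i, ‖(Cᴴ * (M * W)).diag i‖ ≤ singularValues M i := by
    intro i
    rw [Matrix.diag, conjTranspose_mul_apply']
    refine (cs_sum _ _).trans ?_
    have e1 : ∑ j, ‖C j i‖ ^ 2 = 1 := by
      rw [col_norm_sq]
      have : Cᴴ * C = 1 := by
        rw [← star_eq_conjTranspose]; exact (mem_unitaryGroup_iff').mp hCu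
      simp [this]
    have e2 : ∑ j, ‖(M * W) j i‖ ^ 2 = h.eigenvalues i := by
      rw [col_norm_sq, gram_eq]
      simp [Matrix.diagonal_apply_eq]
    rw [e1, e2, Real.sqrt_one, one_mul]
    exact le_of_eq rfl
  exact Finset.sum_le_sum fun i _ => hbound i

end
lemma exists_unitary_trace_eq {n : Type*} [Fintype n] [DecidableEq n] (M : Matrix n n ℂ) :
    ∃ U ∈ unitaryGroup n ℂ, (M * U).trace = (traceNorm M : ℂ) := by
  classical
  set h := (Matrix.posSemidef_conjTranspose_mul_self M).1 with hh
  set W : Matrix n n ℂ := (h.eigenvectorUnitary : Matrix n n ℂ) with hWdef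
  have hWmem : W ∈ unitaryGroup n ℂ := SetLike.coe_mem _
  set lam := h.eigenvalues with hlam
  have hlam0 : ∀ i, 0 ≤ lam i := fun i =>
    (Matrix.posSemidef_conjTranspose_mul_self M).eigenvalues_nonneg i
  set s : n → ℝ := fun i => Real.sqrt (lam i) with hs
  set v : n → EuclideanSpace ℂ n :=
    fun i => (WithLp.equiv 2 (n → ℂ)).symm (fun j => (M * W) j i) with hv
  have hvinner : ∀ i k, (inner ℂ (v i) (v k) : ℂ) = if i = k then (lam i : ℂ) else 0 := by
    intro i k
    have he := congrFun (congrFun (gram_eq M) i) k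
    rw [conjTranspose_mul_apply'] at he
    have : (inner ℂ (v i) (v k) : ℂ) = ∑ j, (starRingEnd ℂ) ((M * W) j i) * ((M * W) j k) := by
      simp [hv, PiLp.inner_apply, RCLike.inner_apply', mul_comm]
    rw [this, he, Matrix.diagonal_apply]
    split <;> simp [hlam]
  set u : n → EuclideanSpace ℂ n := fun i => ((s i : ℂ))⁻¹ • v i with hu
  have horth : Orthonormal ℂ (Set.domRestrict {i | s i ≠ 0} u) := by
    rw [orthonormal_iff_ite]
    rintro ⟨i, hi⟩ ⟨k, hk⟩
    simp only [Set.domRestrict_apply, hu, inner_smul_left, inner_smul_right, hvinner, map_inv₀,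
      Complex.conj_ofReal, Subtype.mk_eq_mk]
    by_cases hik : i = k
    · subst hik
      have hsne : (s i : ℂ) ≠ 0 := by
        simpa using (Complex.ofReal_ne_zero.mpr hi)
      have hls : (lam i : ℂ) = (s i : ℂ) * (s i : ℂ) := by
        rw [← Complex.ofReal_mul, Real.mul_self_sqrt (hlam0 i)]
      simp only [if_pos rfl, hls]
      field_simp
      simp
    · simp [hik]
  have hcard : Module.finrank ℂ (EuclideanSpace ℂ n) = Fintype.card n := finrank_euclideanSpace
  obtain ⟨b, hb⟩ := horth.exists_orthonormalBasis_extension_of_card_eq hcard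
  set Cm : Matrix n n ℂ := fun j i => b i j with hCm
  have hCmem : Cm ∈ unitaryGroup n ℂ := by
    rw [mem_unitaryGroup_iff', star_eq_conjTranspose]
    ext i k
    have hbo := b.orthonormal
    rw [orthonormal_iff_ite] at hbo
    have h2 := hbo i k
    rw [PiLp.inner_apply] at h2
    simp only [RCLike.inner_apply'] at h2
    rw [conjTranspose_mul_apply', Matrix.one_apply]
    simpa [hCm] using h2
  refine ⟨W * Cmᴴ, ?_, ?_⟩
  · rw [← star_eq_conjTranspose]
    exact mul_mem hWmem (Unitary.star_mem hCmem)
  · have e0 : (M * (W * Cmᴴ)).trace = (Cmᴴ * (M * W)).trace := by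
      rw [← Matrix.mul_assoc, trace_mul_comm]
    rw [e0, Matrix.trace]
    have hdiag : ∀ i, (Cmᴴ * (M * W)).diag i = (s i : ℂ) := by
      intro i
      have hin : (Cmᴴ * (M * W)).diag i = (inner ℂ (b i) (v i) : ℂ) := by
        rw [Matrix.diag_apply, conjTranspose_mul_apply']
        simp [PiLp.inner_apply, RCLike.inner_apply', hCm, hv, mul_comm]
      rw [hin]
      by_cases hi : s i ≠ 0
      · rw [hb i hi, hu]
        rw [inner_smul_left, hvinner, if_pos rfl, map_inv₀, Complex.conj_ofReal]
        have hls : (lam i : ℂ) = (s i : ℂ) * (s i : ℂ) := by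
          rw [← Complex.ofReal_mul, Real.mul_self_sqrt (hlam0 i)]
        rw [hls]
        have hsne : (s i : ℂ) ≠ 0 := by simpa using (Complex.ofReal_ne_zero.mpr hi)
        field_simp
      · push_neg at hi
        have hlz : lam i = 0 := by
          exact (Real.sqrt_eq_zero (hlam0 i)).mp hi
        have hvz : v i = 0 := by
          have h3 := hvinner i i
          rw [if_pos rfl, hlz] at h3
          have h4 : (inner ℂ (v i) (v i) : ℂ) = 0 := by rw [h3]; simp
          exact inner_self_eq_zero.mp h4
        rw [hvz, inner_zero_right, hi]
        simp
    rw [Finset.sum_congr rfl (fun i _ => hdiag i), ← Complex.ofReal_sum]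
    norm_cast
lemma re_diag_nonneg {n : Type*} [Fintype n] [DecidableEq n] {X : Matrix n n ℂ}
    (hX : X.PosSemidef) (i : n) : 0 ≤ (X i i).re := by
  have h := hX.re_dotProduct_nonneg (Pi.single i 1)
  simpa [dotProduct, Matrix.mulVec, Pi.single_apply] using h

lemma traceNorm_eq_re_trace {n : Type*} [Fintype n] [DecidableEq n] (X : Matrix n n ℂ) :
    ∃ U ∈ unitaryGroup n ℂ, ((X * U).trace).re = traceNorm X := by
  obtain ⟨U, hU, hTr⟩ := exists_unitary_trace_eq X
  exact ⟨U, hU, by rw [hTr]; simp⟩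

lemma traceNorm_add_le {n : Type*} [Fintype n] [DecidableEq n] (X Y : Matrix n n ℂ) :
    traceNorm (X + Y) ≤ traceNorm X + traceNorm Y := by
  obtain ⟨U, hU, hTr⟩ := traceNorm_eq_re_trace (X + Y)
  rw [← hTr, Matrix.add_mul, trace_add, Complex.add_re]
  exact add_le_add (re_trace_mul_le_traceNorm X U hU) (re_trace_mul_le_traceNorm Y U hU)

lemma fsq_eq {n : Type*} [Fintype n] [DecidableEq n] (X : Matrix n n ℂ) :
    ∑ p : n × n, ‖X p.1 p.2‖ ^ 2 = ((Xᴴ * X).trace).re := by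
  rw [Matrix.trace, Complex.re_sum, Fintype.sum_prod_type, Finset.sum_comm]
  exact Finset.sum_congr rfl fun k _ => col_norm_sq X k

lemma re_trace_conjTranspose_mul_nonneg {n : Type*} [Fintype n] [DecidableEq n]
    (X : Matrix n n ℂ) : 0 ≤ ((Xᴴ * X).trace).re := by
  rw [← fsq_eq]
  exact Finset.sum_nonneg fun p _ => by positivity

/-- Hölder / Cauchy–Schwarz for the trace norm. -/
lemma traceNorm_mul_conjTranspose_le {n : Type*} [Fintype n] [DecidableEq n]
    (X Y : Matrix n n ℂ) :
    traceNorm (X * Yᴴ) ≤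
      Real.sqrt (((Xᴴ * X).trace).re) * Real.sqrt (((Yᴴ * Y).trace).re) := by
  obtain ⟨U, hU, hTr⟩ := traceNorm_eq_re_trace (X * Yᴴ)
  rw [← hTr]
  set Z := Uᴴ * Y with hZ
  have h2 : X * Yᴴ * U = X * Zᴴ := by
    rw [hZ, conjTranspose_mul, conjTranspose_conjTranspose, Matrix.mul_assoc]
  rw [h2]
  have h3 : (X * Zᴴ).trace =
      ∑ p : n × n, (starRingEnd ℂ) (Z p.1 p.2) * X p.1 p.2 := by
    rw [Matrix.trace, Fintype.sum_prod_type]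
    refine Finset.sum_congr rfl fun i _ => ?_
    rw [Matrix.diag_apply, Matrix.mul_apply]
    exact Finset.sum_congr rfl fun j _ => by
      rw [Matrix.conjTranspose_apply, mul_comm]; rfl
  have h4 : ((X * Zᴴ).trace).re ≤ ‖(X * Zᴴ).trace‖ := Complex.re_le_norm _
  refine h4.trans ?_
  rw [h3]
  refine (cs_sum (fun p : n × n => Z p.1 p.2) (fun p : n × n => X p.1 p.2)).trans ?_
  have hZZ : Zᴴ * Z = Yᴴ * Y := by
    rw [hZ, conjTranspose_mul, conjTranspose_conjTranspose]
    have hUU : U * Uᴴ = 1 := by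
      rw [← star_eq_conjTranspose]; exact mem_unitaryGroup_iff.mp hU
    rw [Matrix.mul_assoc, ← Matrix.mul_assoc U, hUU, Matrix.one_mul]
  rw [fsq_eq, fsq_eq, hZZ, mul_comm]
lemma traceNorm_nonneg' {n : Type*} [Fintype n] [DecidableEq n]
    (A : Matrix n n ℂ) : 0 ≤ traceNorm A :=
  Finset.sum_nonneg fun i _ => Real.sqrt_nonneg _

/-- Fuchs–van de Graaf inequalities:
`1 − √F(ρ,σ) ≤ (1/2)‖ρ − σ‖₁ ≤ √(1 − F(ρ,σ))` with fidelity `F(ρ,σ) = ‖√ρ √σ‖₁²`. -/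
theorem fuchs_van_de_graaf {d : ℕ}
    (ρ σ : Matrix (Fin d) (Fin d) ℂ)
    (hρ : ρ.PosSemidef) (htrρ : ρ.trace = 1)
    (hσ : σ.PosSemidef) (htrσ : σ.trace = 1) :
    1 - Real.sqrt ((traceNorm (hρ.sqrt * hσ.sqrt)) ^ 2) ≤ (1 / 2) * traceNorm (ρ - σ) ∧
      (1 / 2) * traceNorm (ρ - σ) ≤
        Real.sqrt (1 - (traceNorm (hρ.sqrt * hσ.sqrt)) ^ 2) := by
  classical
  set A := hρ.sqrt with hA
  set B := hσ.sqrt with hB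
  have hAps : A.PosSemidef := hρ.posSemidef_sqrt
  have hBps : B.PosSemidef := hσ.posSemidef_sqrt
  have hAH : Aᴴ = A := hAps.1
  have hBH : Bᴴ = B := hBps.1
  have hAA : A * A = ρ := hρ.sqrt_mul_self
  have hBB : B * B = σ := hσ.sqrt_mul_self
  set N := traceNorm (A * B) with hN
  have hN0 : 0 ≤ N := traceNorm_nonneg' _
  have hsqN : Real.sqrt (N ^ 2) = N := Real.sqrt_sq hN0
  ------------------------------------------------------------------
  -- LEFT INEQUALITY (Powers–Størmer)
  ------------------------------------------------------------------
  have hreAB : ((A * B).trace).re ≤ N := by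
    have h1 := re_trace_mul_le_traceNorm (A * B) 1 (one_mem _)
    simpa using h1
  set S := A - B with hS
  have hSH : S.IsHermitian := by
    show Sᴴ = S
    rw [hS, conjTranspose_sub, hAH, hBH]
  set T := A + B with hT
  set μ := hSH.eigenvalues with hμ
  set W : Matrix (Fin d) (Fin d) ℂ := (hSH.eigenvectorUnitary : Matrix (Fin d) (Fin d) ℂ)
    with hW
  have hWU : W ∈ unitaryGroup (Fin d) ℂ := SetLike.coe_mem _
  have hWW' : Wᴴ * W = 1 := by rw [← star_eq_conjTranspose]; exact mem_unitaryGroup_iff'.mp hWU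
  have hWW : W * Wᴴ = 1 := by rw [← star_eq_conjTranspose]; exact mem_unitaryGroup_iff.mp hWU
  have key : ∀ X Y : Matrix (Fin d) (Fin d) ℂ,
      (W * X * Wᴴ) * (W * Y * Wᴴ) = W * (X * Y) * Wᴴ := by
    intro X Y
    simp only [Matrix.mul_assoc]
    rw [← Matrix.mul_assoc Wᴴ W, hWW', Matrix.one_mul]
  have trace_conj : ∀ X : Matrix (Fin d) (Fin d) ℂ, (W * X * Wᴴ).trace = X.trace := by
    intro X
    rw [trace_mul_comm, ← Matrix.mul_assoc, hWW', Matrix.one_mul]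
  set Dμ : Matrix (Fin d) (Fin d) ℂ := diagonal (fun i => (μ i : ℂ)) with hDμ
  have hspec : S = W * Dμ * Wᴴ := by
    have h1 := hSH.spectral_theorem'
    rw [star_eq_conjTranspose] at h1
    exact h1
  have hdiagS : Wᴴ * S * W = Dμ := by
    have h1 := hSH.star_mul_self_mul_eq_diagonal
    rw [star_eq_conjTranspose] at h1
    exact h1
  set ε : Fin d → ℂ := fun i => if 0 ≤ μ i then 1 else -1 with hε
  have hεconj : ∀ i, star (ε i) = ε i := by
    intro i; rw [hε]; dsimp only; split <;> simp
  have hεsq : ∀ i, ε i * ε i = 1 := by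
    intro i; rw [hε]; dsimp only; split <;> norm_num
  have hεμ : ∀ i, (μ i : ℂ) * ε i = ((|μ i| : ℝ) : ℂ) := by
    intro i; rw [hε]; dsimp only
    split
    · rw [abs_of_nonneg ‹_›]; simp
    · rw [abs_of_neg (by linarith [not_le.mp ‹¬ 0 ≤ μ i›])]; push_cast; ring
  set Dε : Matrix (Fin d) (Fin d) ℂ := diagonal ε with hDε
  set J : Matrix (Fin d) (Fin d) ℂ := W * Dε * Wᴴ with hJ
  have hJH : Jᴴ = J := by
    rw [hJ, conjTranspose_mul, conjTranspose_mul, conjTranspose_conjTranspose, hDε,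
      diagonal_conjTranspose, ← Matrix.mul_assoc]
    have hstar : star ε = ε := funext hεconj
    rw [hstar]
  have hJU : J ∈ unitaryGroup (Fin d) ℂ := by
    rw [mem_unitaryGroup_iff, star_eq_conjTranspose, hJH, hJ, key, hDε, diagonal_mul_diagonal]
    have h1 : (fun i => ε i * ε i) = fun _ => (1 : ℂ) := funext hεsq
    rw [h1, diagonal_one, Matrix.mul_one, hWW]
  set T' := Wᴴ * T * W with hT'
  have hTback : W * T' * Wᴴ = T := by
    rw [hT']
    simp only [Matrix.mul_assoc]
    rw [hWW, Matrix.mul_one, ← Matrix.mul_assoc, hWW, Matrix.one_mul]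
  have h2ρσ : S * T + T * S = (ρ - σ) + (ρ - σ) := by
    rw [hS, hT, ← hAA, ← hBB]; noncomm_ring
  have hSTJ : S * T * J = W * (Dμ * T' * Dε) * Wᴴ := by
    rw [hspec, ← hTback, hJ, key, key]
  have hTSJ : T * S * J = W * (T' * Dμ * Dε) * Wᴴ := by
    rw [hspec, ← hTback, hJ, key, key]
  -- diagonal bound
  have hTd : ∀ i, |μ i| ≤ (T' i i).re := by
    intro i
    have hplusM : T' + Dμ = Wᴴ * (A + A) * W := by
      rw [hT', ← hdiagS, ← Matrix.add_mul, ← Matrix.mul_add]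
      congr 2
      rw [hT, hS]; noncomm_ring
    have hminusM : T' - Dμ = Wᴴ * (B + B) * W := by
      rw [hT', ← hdiagS, ← Matrix.sub_mul, ← Matrix.mul_sub]
      congr 2
      rw [hT, hS]; noncomm_ring
    have hplus : (0:ℝ) ≤ (T' i i).re + μ i := by
      have hpsd : (T' + Dμ).PosSemidef := by
        rw [hplusM]; exact (hAps.add hAps).conjTranspose_mul_mul_same W
      have h1 := re_diag_nonneg hpsd i
      simpa [Matrix.add_apply, hDμ, Matrix.diagonal_apply_eq] using h1
    have hminus : (0:ℝ) ≤ (T' i i).re - μ i := by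
      have hpsd : (T' - Dμ).PosSemidef := by
        rw [hminusM]; exact (hBps.add hBps).conjTranspose_mul_mul_same W
      have h1 := re_diag_nonneg hpsd i
      simpa [Matrix.sub_apply, hDμ, Matrix.diagonal_apply_eq] using h1
    exact abs_le.mpr ⟨by linarith, by linarith⟩
  -- the two traces
  have e1 : (S * T * J).trace = ∑ i, (μ i : ℂ) * T' i i * ε i := by
    rw [hSTJ, trace_conj, Matrix.trace]
    refine Finset.sum_congr rfl fun i _ => ?_
    rw [Matrix.diag_apply, mul_diagonal, hDμ, diagonal_mul]
  have e2 : (T' * Dμ * Dε).trace = ∑ i, (μ i : ℂ) * T' i i * ε i := by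
    rw [Matrix.trace]
    refine Finset.sum_congr rfl fun i _ => ?_
    rw [Matrix.diag_apply, mul_diagonal, hDμ, mul_diagonal]
    ring
  have e2' : (T * S * J).trace = ∑ i, (μ i : ℂ) * T' i i * ε i := by
    rw [hTSJ, trace_conj, e2]
  have hterm : ∀ i, ((μ i : ℂ) * T' i i * ε i).re = |μ i| * (T' i i).re := by
    intro i
    have : (μ i : ℂ) * T' i i * ε i = ((|μ i| : ℝ) : ℂ) * T' i i := by
      rw [← hεμ i]; ring
    rw [this]
    simp
  have hre : ∑ i, μ i ^ 2 ≤ (((ρ - σ) * J).trace).re := by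
    have htrace2 : ((ρ - σ) * J).trace + ((ρ - σ) * J).trace
        = (S * T * J).trace + (T * S * J).trace := by
      rw [← trace_add, ← trace_add, ← Matrix.add_mul, ← Matrix.add_mul, h2ρσ]
    have h1 : (((ρ - σ) * J).trace).re + (((ρ - σ) * J).trace).re
        = ∑ i, |μ i| * (T' i i).re + ∑ i, |μ i| * (T' i i).re := by
      have := congrArg Complex.re htrace2
      rw [Complex.add_re, Complex.add_re, e1, e2', Complex.re_sum] at this
      rw [this, Finset.sum_congr rfl fun i _ => hterm i]
    have h2 : ∀ i, μ i ^ 2 ≤ |μ i| * (T' i i).re := by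
      intro i
      have := mul_le_mul_of_nonneg_left (hTd i) (abs_nonneg (μ i))
      calc μ i ^ 2 = |μ i| * |μ i| := by rw [← sq_abs]; ring
        _ ≤ |μ i| * (T' i i).re := this
    have h3 : ∑ i, μ i ^ 2 ≤ ∑ i, |μ i| * (T' i i).re :=
      Finset.sum_le_sum fun i _ => h2 i
    linarith
  -- sum of squares of eigenvalues
  have hSS : ∑ i, μ i ^ 2 = 2 - 2 * ((A * B).trace).re := by
    have hmat : S * S = (A * A + B * B) - (A * B + B * A) := by
      rw [hS]; noncomm_ring
    have htr1 : (S * S).trace = (2 : ℂ) - ((A * B).trace + (B * A).trace) := by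
      rw [hmat, trace_sub, trace_add, trace_add, hAA, hBB, htrρ, htrσ]
      ring
    have htr2 : (S * S).trace = ∑ i, ((μ i : ℂ)) ^ 2 := by
      rw [hspec, key, hDμ, diagonal_mul_diagonal, trace_conj, trace_diagonal]
      refine Finset.sum_congr rfl fun i _ => ?_
      ring
    have htrBA : (B * A).trace = (A * B).trace := trace_mul_comm B A
    have := htr2.symm.trans htr1
    have hre2 := congrArg Complex.re this
    rw [Complex.re_sum] at hre2
    rw [htrBA] at hre2
    simp only [Complex.sub_re, Complex.add_re] at hre2
    push_cast at hre2
    convert hre2 using 1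
    · exact Finset.sum_congr rfl fun i _ => by rw [← Complex.ofReal_pow, Complex.ofReal_re]
    · simp; ring
  have hleft : 2 - 2 * N ≤ traceNorm (ρ - σ) := by
    have hd := re_trace_mul_le_traceNorm (ρ - σ) J hJU
    linarith
  ------------------------------------------------------------------
  -- RIGHT INEQUALITY
  ------------------------------------------------------------------
  obtain ⟨V, hV, hVtr⟩ := exists_unitary_trace_eq (A * B)
  have hVV : V * Vᴴ = 1 := by
    rw [← star_eq_conjTranspose]; exact mem_unitaryGroup_iff.mp hV
  set C := B * V with hC
  have hCH : Cᴴ = Vᴴ * B := by rw [hC, conjTranspose_mul, hBH]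
  have hCC : C * Cᴴ = σ := by
    rw [hC, hCH, Matrix.mul_assoc, ← Matrix.mul_assoc V, hVV, Matrix.one_mul, hBB]
  have htrAC : (A * C).trace = (N : ℂ) := by
    rw [hC, ← Matrix.mul_assoc]
    exact hVtr
  have htrCHA : (Cᴴ * A).trace = (N : ℂ) := by
    have h1 : Cᴴ * A = (A * C)ᴴ := by
      rw [conjTranspose_mul A C, hAH]
    rw [h1, trace_conjTranspose, htrAC]
    simp [Complex.star_def, Complex.conj_ofReal]
  have htrCHC : (Cᴴ * C).trace = 1 := by
    have h1 : Cᴴ * C = Vᴴ * (B * B) * V := by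
      rw [hCH, hC]; noncomm_ring
    rw [h1, trace_mul_cycle, ← Matrix.mul_assoc, hVV, Matrix.one_mul, hBB, htrσ]
  have hSm : (((A - C)ᴴ * (A - C)).trace).re = 2 - 2 * N := by
    have hexp : (A - C)ᴴ * (A - C) = (A * A + Cᴴ * C) - (A * C + Cᴴ * A) := by
      rw [conjTranspose_sub, hAH]; noncomm_ring
    rw [hexp, trace_sub, trace_add, trace_add, hAA, htrρ, htrCHC, htrAC, htrCHA]
    simp only [Complex.sub_re, Complex.add_re, Complex.one_re, Complex.ofReal_re]
    ring
  have hSp : (((A + C)ᴴ * (A + C)).trace).re = 2 + 2 * N := by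
    have hexp : (A + C)ᴴ * (A + C) = (A * A + Cᴴ * C) + (A * C + Cᴴ * A) := by
      rw [conjTranspose_add, hAH]; noncomm_ring
    rw [hexp, trace_add, trace_add, trace_add, hAA, htrρ, htrCHC, htrAC, htrCHA]
    simp only [Complex.add_re, Complex.one_re, Complex.ofReal_re]
    ring
  have hN1 : N ≤ 1 := by
    have h1 := re_trace_conjTranspose_mul_nonneg (A - C)
    rw [hSm] at h1
    linarith
  have hsplit : (ρ - σ) + (ρ - σ) = (A - C) * (A + C)ᴴ + (A + C) * (A - C)ᴴ := by
    rw [conjTranspose_add, conjTranspose_sub, hAH, ← hAA, ← hCC]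
    noncomm_ring
  obtain ⟨U₀, hU₀, hU₀tr⟩ := traceNorm_eq_re_trace (ρ - σ)
  have hHol1 : traceNorm ((A - C) * (A + C)ᴴ) ≤
      Real.sqrt (2 - 2 * N) * Real.sqrt (2 + 2 * N) := by
    have h1 := traceNorm_mul_conjTranspose_le (A - C) (A + C)
    rw [hSm, hSp] at h1
    exact h1
  have hHol2 : traceNorm ((A + C) * (A - C)ᴴ) ≤
      Real.sqrt (2 + 2 * N) * Real.sqrt (2 - 2 * N) := by
    have h1 := traceNorm_mul_conjTranspose_le (A + C) (A - C)
    rw [hSm, hSp] at h1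
    exact h1
  have hDD : traceNorm (ρ - σ) + traceNorm (ρ - σ) ≤
      Real.sqrt (2 - 2 * N) * Real.sqrt (2 + 2 * N)
        + Real.sqrt (2 + 2 * N) * Real.sqrt (2 - 2 * N) := by
    have h1 : traceNorm (ρ - σ) + traceNorm (ρ - σ)
        = ((((ρ - σ) + (ρ - σ)) * U₀).trace).re := by
      rw [Matrix.add_mul, trace_add, Complex.add_re, hU₀tr]
    rw [h1, hsplit, Matrix.add_mul, trace_add, Complex.add_re]
    exact add_le_add
      ((re_trace_mul_le_traceNorm _ U₀ hU₀).trans hHol1)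
      ((re_trace_mul_le_traceNorm _ U₀ hU₀).trans hHol2)
  have hprod : Real.sqrt (2 - 2 * N) * Real.sqrt (2 + 2 * N) = 2 * Real.sqrt (1 - N ^ 2) := by
    rw [← Real.sqrt_mul (by linarith)]
    have h4 : (2 - 2 * N) * (2 + 2 * N) = 4 * (1 - N ^ 2) := by ring
    rw [h4, Real.sqrt_mul (by norm_num)]
    congr 1
    rw [show (4:ℝ) = 2 ^ 2 by norm_num, Real.sqrt_sq (by norm_num)]
  constructor
  · rw [hsqN]; linarith
  · rw [hprod] at hDD
    linarith
end

section
/- Second-order Trotter error for the swap trick: for density matrices ρ, σ and Hermitian H̃ with ‖H̃‖∞ ≤ C, Tr_ρ[e^{−iH̃Δt}(ρ ⊗ σ)e^{iH̃Δt}] = σ − iΔt·[Tr_ρ(H̃(ρ⊗I)) -type commutator term] + O(Δt²); specifically, in the case H̃ = F (the swap operator), Tr₁[e^{−iFΔt}(ρ⊗σ)e^{iFΔt}] = cos²(Δt)·σ + sin²(Δt)·ρ − i sin(Δt)cos(Δt)·[ρ, σ]. -/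
open scoped Matrix ComplexOrder Kronecker

/-- Partial trace over the first tensor factor. -/
noncomputable def ptrace1 {d : ℕ} (M : Matrix (Fin d × Fin d) (Fin d × Fin d) ℂ) :
    Matrix (Fin d) (Fin d) ℂ :=
  Matrix.of fun j l => ∑ i, M (i, j) (i, l)

/-- The swap operator `F = Σ_{i,j} |i⟩⟨j| ⊗ |j⟩⟨i|` on `ℂ^d ⊗ ℂ^d`. -/
def swapOp (d : ℕ) : Matrix (Fin d × Fin d) (Fin d × Fin d) ℂ :=
  fun p q => if p.1 = q.2 ∧ p.2 = q.1 then 1 else 0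

lemma swapOp_mul_swapOp (d : ℕ) : swapOp d * swapOp d = 1 := by
  ext ⟨i, j⟩ ⟨k, l⟩
  simp [swapOp, Matrix.mul_apply, Fintype.sum_prod_type, Matrix.one_apply, ite_and,
    Prod.ext_iff, eq_comm, and_comm]

set_option maxHeartbeats 1000000 in
lemma exp_smul_swap {d : ℕ} (t : ℝ) :
    NormedSpace.exp ((-(Complex.I * (t : ℂ))) • swapOp d) =
      (Real.cos t : ℂ) • (1 : Matrix (Fin d × Fin d) (Fin d × Fin d) ℂ) -
        (Complex.I * (Real.sin t : ℂ)) • swapOp d := by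
  set z : ℂ := -(Complex.I * (t : ℂ)) with hz
  have hz2 : z ^ 2 = -((t : ℂ) ^ 2) := by
    rw [hz, neg_pow, mul_pow, Complex.I_sq]; ring
  have hpow_even : ∀ k : ℕ, (z • swapOp d) ^ (2 * k) =
      ((-1 : ℂ) ^ k * (t : ℂ) ^ (2 * k)) • (1 : Matrix (Fin d × Fin d) (Fin d × Fin d) ℂ) := by
    intro k
    rw [smul_pow, pow_mul, pow_mul]
    conv_lhs => rw [pow_two (swapOp d), swapOp_mul_swapOp, one_pow, hz2]
    congr 1
    rw [neg_pow, ← pow_mul]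
  have hpow_odd : ∀ k : ℕ, (z • swapOp d) ^ (2 * k + 1) =
      ((-1 : ℂ) ^ k * (t : ℂ) ^ (2 * k) * z) • swapOp d := by
    intro k
    rw [pow_succ, hpow_even, smul_mul_assoc, Matrix.one_mul, smul_smul, mul_smul]
  have hcos : HasSum (fun k : ℕ => ((Nat.factorial (2 * k) : ℂ))⁻¹ • (z • swapOp d) ^ (2 * k))
      ((Real.cos t : ℂ) • (1 : Matrix (Fin d × Fin d) (Fin d × Fin d) ℂ)) := by
    have h := (Complex.hasSum_cos (t : ℂ)).smul_const
      (1 : Matrix (Fin d × Fin d) (Fin d × Fin d) ℂ)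
    rw [Complex.ofReal_cos]
    convert h using 2 with k
    rw [hpow_even, smul_smul]
    congr 1
    rw [div_eq_mul_inv]
    ring
  have hsin : HasSum (fun k : ℕ => ((Nat.factorial (2 * k + 1) : ℂ))⁻¹ • (z • swapOp d) ^ (2 * k + 1))
      (-(Complex.I * (Real.sin t : ℂ)) • swapOp d) := by
    have h := ((Complex.hasSum_sin (t : ℂ)).mul_left (-Complex.I)).smul_const (swapOp d)
    rw [Complex.ofReal_sin,
      show -(Complex.I * Complex.sin (t : ℂ)) = -Complex.I * Complex.sin (t : ℂ) by ring]
    convert h using 2 with k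
    rw [hpow_odd, smul_smul]
    congr 1
    rw [hz, div_eq_mul_inv]
    ring
  have hsum : HasSum (fun n : ℕ => ((Nat.factorial n : ℂ))⁻¹ • (z • swapOp d) ^ n)
      ((Real.cos t : ℂ) • (1 : Matrix (Fin d × Fin d) (Fin d × Fin d) ℂ) -
        (Complex.I * (Real.sin t : ℂ)) • swapOp d) := by
    have h := HasSum.even_add_odd
      (f := fun n : ℕ => ((Nat.factorial n : ℂ))⁻¹ • (z • swapOp d) ^ n) hcos hsin
    simpa [neg_smul, sub_eq_add_neg] using h
  rw [NormedSpace.exp_eq_tsum (𝕂 := ℂ)]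
  exact hsum.tsum_eq

lemma ptrace1_smul {d : ℕ} (a : ℂ) (M : Matrix (Fin d × Fin d) (Fin d × Fin d) ℂ) :
    ptrace1 (a • M) = a • ptrace1 M := by
  ext j l; simp [ptrace1, Finset.mul_sum]

lemma ptrace1_add {d : ℕ} (M N : Matrix (Fin d × Fin d) (Fin d × Fin d) ℂ) :
    ptrace1 (M + N) = ptrace1 M + ptrace1 N := by
  ext j l; simp [ptrace1, Finset.sum_add_distrib]

lemma ptrace1_sub {d : ℕ} (M N : Matrix (Fin d × Fin d) (Fin d × Fin d) ℂ) :
    ptrace1 (M - N) = ptrace1 M - ptrace1 N := by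
  ext j l; simp [ptrace1, Finset.sum_sub_distrib]

lemma ptrace1_kron {d : ℕ} (ρ σ : Matrix (Fin d) (Fin d) ℂ) :
    ptrace1 (ρ ⊗ₖ σ) = ρ.trace • σ := by
  ext j l
  simp [ptrace1, Matrix.kroneckerMap_apply, Matrix.trace, Matrix.diag, Finset.sum_mul]

lemma swap_mul_apply {d : ℕ} (M : Matrix (Fin d × Fin d) (Fin d × Fin d) ℂ)
    (i j k l : Fin d) : (swapOp d * M) (i, j) (k, l) = M (j, i) (k, l) := by
  simp [swapOp, Matrix.mul_apply, Fintype.sum_prod_type, ite_and]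

lemma mul_swap_apply {d : ℕ} (M : Matrix (Fin d × Fin d) (Fin d × Fin d) ℂ)
    (i j k l : Fin d) : (M * swapOp d) (i, j) (k, l) = M (i, j) (l, k) := by
  simp [swapOp, Matrix.mul_apply, Fintype.sum_prod_type, ite_and, eq_comm]

lemma ptrace1_swap_mul {d : ℕ} (ρ σ : Matrix (Fin d) (Fin d) ℂ) :
    ptrace1 (swapOp d * (ρ ⊗ₖ σ)) = ρ * σ := by
  ext j l
  simp only [ptrace1, Matrix.of_apply, swap_mul_apply]
  simp [Matrix.kroneckerMap_apply, Matrix.mul_apply]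

lemma ptrace1_mul_swap {d : ℕ} (ρ σ : Matrix (Fin d) (Fin d) ℂ) :
    ptrace1 ((ρ ⊗ₖ σ) * swapOp d) = σ * ρ := by
  ext j l
  simp only [ptrace1, Matrix.of_apply, mul_swap_apply]
  simp [Matrix.kroneckerMap_apply, Matrix.mul_apply, mul_comm]

lemma ptrace1_swap_conj {d : ℕ} (ρ σ : Matrix (Fin d) (Fin d) ℂ) :
    ptrace1 (swapOp d * (ρ ⊗ₖ σ) * swapOp d) = σ.trace • ρ := by
  ext j l
  simp only [ptrace1, Matrix.of_apply, mul_swap_apply, swap_mul_apply]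
  simp [Matrix.kroneckerMap_apply, Matrix.trace, Matrix.diag, Finset.mul_sum, mul_comm]

/-- The swap trick: for density matrices `ρ, σ`,
`Tr₁[e^{−iFΔt}(ρ⊗σ)e^{iFΔt}] = cos²(Δt)·σ + sin²(Δt)·ρ − i sin(Δt)cos(Δt)·[ρ, σ]`. -/
theorem swap_trick_exact {d : ℕ} (hd : 1 ≤ d)
    (ρ σ : Matrix (Fin d) (Fin d) ℂ)
    (hρ : ρ.PosSemidef) (htrρ : ρ.trace = 1)
    (hσ : σ.PosSemidef) (htrσ : σ.trace = 1)
    (Δt : ℝ) :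
    ptrace1 (NormedSpace.exp ((-(Complex.I * (Δt : ℂ))) • swapOp d) *
        (ρ ⊗ₖ σ) *
        NormedSpace.exp ((Complex.I * (Δt : ℂ)) • swapOp d)) =
      ((Real.cos Δt : ℂ) ^ 2) • σ + ((Real.sin Δt : ℂ) ^ 2) • ρ -
        (Complex.I * (Real.sin Δt : ℂ) * (Real.cos Δt : ℂ)) • (ρ * σ - σ * ρ) := by
  have h1 := exp_smul_swap (d := d) Δt
  have h2 : NormedSpace.exp ((Complex.I * (Δt : ℂ)) • swapOp d) =
      (Real.cos Δt : ℂ) • (1 : Matrix (Fin d × Fin d) (Fin d × Fin d) ℂ) +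
        (Complex.I * (Real.sin Δt : ℂ)) • swapOp d := by
    have h := exp_smul_swap (d := d) (-Δt)
    rw [show ((-Δt : ℝ) : ℂ) = -(Δt : ℂ) by push_cast; ring] at h
    rw [show (-(Complex.I * -(Δt : ℂ))) = Complex.I * (Δt : ℂ) by ring] at h
    rw [h, Real.cos_neg, Real.sin_neg]
    push_cast
    rw [mul_neg, neg_smul, sub_neg_eq_add]
  rw [h1, h2]
  set c : ℂ := (Real.cos Δt : ℂ)
  set s : ℂ := (Real.sin Δt : ℂ)
  set F := swapOp d
  set M := ρ ⊗ₖ σ with hM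
  have expand : (c • (1 : Matrix (Fin d × Fin d) (Fin d × Fin d) ℂ) - (Complex.I * s) • F) * M *
      (c • 1 + (Complex.I * s) • F) =
      (c * c) • M + (c * (Complex.I * s)) • (M * F) - (Complex.I * s * c) • (F * M)
        - (Complex.I * s * (Complex.I * s)) • (F * M * F) := by
    simp only [Matrix.sub_mul, Matrix.add_mul, Matrix.mul_add, Matrix.smul_mul,
      Matrix.mul_smul, Matrix.one_mul, Matrix.mul_one, smul_smul]
    module
  rw [expand, ptrace1_sub, ptrace1_sub, ptrace1_add, ptrace1_smul, ptrace1_smul, ptrace1_smul,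
    ptrace1_smul, ptrace1_kron, ptrace1_mul_swap, ptrace1_swap_mul,
    show F * M * F = F * (ρ ⊗ₖ σ) * F from rfl, ptrace1_swap_conj, htrρ, htrσ]
  have hI : Complex.I * s * (Complex.I * s) = -(s * s) := by
    rw [show Complex.I * s * (Complex.I * s) = Complex.I ^ 2 * (s * s) by ring, Complex.I_sq]
    ring
  rw [hI]
  module
end
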